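/- Let p, p̃ ∈ [0,1] and let x = (x₁,x₂,u) and x̃ = (x̃₁,x̃₂,ũ) be configurations with p̃ ≥ p, x̃₁ ≥ x₁ and x̃₂ ≤ x₂. Then for all t ≥ 0, Pr[T₂(p,x) ≤ t] ≥ Pr[T₂(p̃,x̃) ≤ t], where T₂(p,x) denotes the first time s ≥ 0 at which X₂(s) = n for the chain USD_p started from x. -/

import Mathlib

open MeasureTheory

/-- The one-step transition probability of the stubborn undecided-state dynamics `USD_p`
with `n` agents, from configuration `c = (x₁, x₂, u)` to configuration `d`. -/
noncomputable def usdStep (n : ℕ) (p : ℝ) (c d : ℕ × ℕ × ℕ) : ℝ :=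
  (if d = (c.1 - 1, c.2.1, c.2.2 + 1) then (1 - p) * (c.1 : ℝ) * (c.2.1 : ℝ) / (n : ℝ) ^ 2 else 0) +
  (if d = (c.1, c.2.1 - 1, c.2.2 + 1) then (c.1 : ℝ) * (c.2.1 : ℝ) / (n : ℝ) ^ 2 else 0) +
  (if d = (c.1 + 1, c.2.1, c.2.2 - 1) then (c.2.2 : ℝ) * (c.1 : ℝ) / (n : ℝ) ^ 2 else 0) +
  (if d = (c.1, c.2.1 + 1, c.2.2 - 1) then (c.2.2 : ℝ) * (c.2.1 : ℝ) / (n : ℝ) ^ 2 else 0) +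
  (if d = c then
    1 - ((2 - p) * (c.1 : ℝ) * (c.2.1 : ℝ) + (c.2.2 : ℝ) * ((c.1 : ℝ) + (c.2.1 : ℝ))) / (n : ℝ) ^ 2
  else 0)


open Finset

abbrev Cfg := ℕ × ℕ × ℕ

def VCfg (n : ℕ) (c : Cfg) : Prop := c.1 + c.2.1 + c.2.2 = n

def stepF (n : ℕ) (c : Cfg) (i j k : ℕ) : Cfg :=
  if i < c.1 ∧ n - c.2.1 ≤ j ∧ 1 ≤ k then (c.1 - 1, c.2.1, c.2.2 + 1)
  else if n - c.2.1 ≤ i ∧ j < c.1 then (c.1, c.2.1 - 1, c.2.2 + 1)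
  else if (c.1 ≤ i ∧ i < n - c.2.1) ∧ j < c.1 then (c.1 + 1, c.2.1, c.2.2 - 1)
  else if (c.1 ≤ i ∧ i < n - c.2.1) ∧ n - c.2.1 ≤ j then (c.1, c.2.1 + 1, c.2.2 - 1)
  else c

lemma stepF_valid {n : ℕ} {c : Cfg} (hc : VCfg n c) {i : ℕ} (hi : i < n) (j k : ℕ) :
    VCfg n (stepF n c i j k) := by
  obtain ⟨a, b2, u⟩ := c
  simp only [VCfg] at hc ⊢
  unfold stepF
  split_ifs <;> dsimp only at * <;> omega

lemma stepF_mono {n : ℕ} {c ct : Cfg} (hc : VCfg n c) (hct : VCfg n ct)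
    (h1 : c.1 ≤ ct.1) (h2 : ct.2.1 ≤ c.2.1) (i j : ℕ)
    {k kt : ℕ} (hk : kt ≤ k) :
    (stepF n c i j k).1 ≤ (stepF n ct i j kt).1 ∧
    (stepF n ct i j kt).2.1 ≤ (stepF n c i j k).2.1 := by
  obtain ⟨a, b2, u⟩ := c
  obtain ⟨a', b2', u'⟩ := ct
  simp only [VCfg] at hc hct
  simp only at h1 h2
  unfold stepF
  split_ifs <;> dsimp only at * <;> omega

/-- `hitP n p t c` : probability that `USD_p` started at `c` reaches `X₂ = n` within `t` steps. -/
noncomputable def hitP (n : ℕ) (p : ℝ) : ℕ → Cfg → ℝ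
  | 0, c => if c.2.1 = n then 1 else 0
  | t+1, c => if c.2.1 = n then 1 else
      (∑ i ∈ range n, ∑ j ∈ range n,
        (p * hitP n p t (stepF n c i j 0) + (1-p) * hitP n p t (stepF n c i j 1))) / (n:ℝ)^2

lemma hitP_nonneg {n : ℕ} {p : ℝ} (hp0 : 0 ≤ p) (hp1 : p ≤ 1) :
    ∀ t c, 0 ≤ hitP n p t c := by
  intro t
  induction t with
  | zero => intro c; unfold hitP; split <;> norm_num
  | succ t ih =>
    intro c
    unfold hitP
    split
    · norm_num
    · apply div_nonneg _ (by positivity)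
      apply Finset.sum_nonneg; intro i _
      apply Finset.sum_nonneg; intro j _
      have := ih (stepF n c i j 0)
      have := ih (stepF n c i j 1)
      nlinarith

lemma hitP_le_one {n : ℕ} (hn : 1 ≤ n) {p : ℝ} (hp0 : 0 ≤ p) (hp1 : p ≤ 1) :
    ∀ t c, hitP n p t c ≤ 1 := by
  intro t
  induction t with
  | zero => intro c; unfold hitP; split <;> norm_num
  | succ t ih =>
    intro c
    unfold hitP
    split
    · norm_num
    · rw [div_le_one (by positivity)]
      calc ∑ i ∈ range n, ∑ j ∈ range n,
            (p * hitP n p t (stepF n c i j 0) + (1-p) * hitP n p t (stepF n c i j 1))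
          ≤ ∑ i ∈ range n, ∑ j ∈ range n, (1:ℝ) := by
            apply Finset.sum_le_sum; intro i _
            apply Finset.sum_le_sum; intro j _
            have h0 := ih (stepF n c i j 0)
            have h1 := ih (stepF n c i j 1)
            nlinarith
        _ = (n:ℝ)^2 := by simp [Finset.sum_const]; ring

lemma hitP_mono {n : ℕ} (hn : 1 ≤ n) {p pt : ℝ}
    (hp0 : 0 ≤ p) (hpt1 : pt ≤ 1) (hple : p ≤ pt) :
    ∀ t (c ct : Cfg), VCfg n c → VCfg n ct → c.1 ≤ ct.1 → ct.2.1 ≤ c.2.1 →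
      hitP n pt t ct ≤ hitP n p t c := by
  have hp1 : p ≤ 1 := le_trans hple hpt1
  have hpt0 : 0 ≤ pt := le_trans hp0 hple
  intro t
  induction t with
  | zero =>
    intro c ct hc hct h1 h2
    have hcle : c.2.1 ≤ n := by simp only [VCfg] at hc; omega
    unfold hitP
    split_ifs with hA hB hB
    · exact le_refl 1
    · exact absurd rfl (by omega : ¬ (0:ℕ) = 0) -- impossible
    · norm_num
    · norm_num
  | succ t ih =>
    intro c ct hc hct h1 h2
    have hcle : c.2.1 ≤ n := by simp only [VCfg] at hc; omega
    unfold hitP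
    split_ifs with hA hB hB
    · exact le_refl 1
    · exact absurd rfl (by omega : ¬ (0:ℕ) = 0)
    · have h := hitP_le_one hn hpt0 hpt1 (t+1) ct
      simp only [hitP, if_neg hA] at h
      exact h
    · gcongr ?_ / _
      apply Finset.sum_le_sum; intro i hi
      apply Finset.sum_le_sum; intro j _
      rw [Finset.mem_range] at hi
      have ha := ih (stepF n c i j 0) (stepF n ct i j 0) (stepF_valid hc hi j 0)
        (stepF_valid hct hi j 0)
        (stepF_mono hc hct h1 h2 i j (le_refl 0)).1 (stepF_mono hc hct h1 h2 i j (le_refl 0)).2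
      have hb := ih (stepF n c i j 1) (stepF n ct i j 0) (stepF_valid hc hi j 1)
        (stepF_valid hct hi j 0)
        (stepF_mono hc hct h1 h2 i j (by norm_num : (0:ℕ) ≤ 1)).1
        (stepF_mono hc hct h1 h2 i j (by norm_num : (0:ℕ) ≤ 1)).2
      have hcc := ih (stepF n c i j 1) (stepF n ct i j 1) (stepF_valid hc hi j 1)
        (stepF_valid hct hi j 1)
        (stepF_mono hc hct h1 h2 i j (le_refl 1)).1 (stepF_mono hc hct h1 h2 i j (le_refl 1)).2
      have f1 : 0 ≤ p * (hitP n p t (stepF n c i j 0) - hitP n pt t (stepF n ct i j 0)) :=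
        mul_nonneg hp0 (sub_nonneg.2 ha)
      have f2 : 0 ≤ (pt - p) * (hitP n p t (stepF n c i j 1) - hitP n pt t (stepF n ct i j 0)) :=
        mul_nonneg (sub_nonneg.2 hple) (sub_nonneg.2 hb)
      have f3 : 0 ≤ (1 - pt) * (hitP n p t (stepF n c i j 1) - hitP n pt t (stepF n ct i j 1)) :=
        mul_nonneg (sub_nonneg.2 hpt1) (sub_nonneg.2 hcc)
      linarith

/-- The finite set of valid configurations. -/
def Sn (n : ℕ) : Finset Cfg :=
  ((Finset.range (n+1)) ×ˢ (Finset.range (n+1)) ×ˢ (Finset.range (n+1))).filter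
    fun c => c.1 + c.2.1 + c.2.2 = n

lemma mem_Sn {n : ℕ} {c : Cfg} : c ∈ Sn n ↔ VCfg n c := by
  obtain ⟨a, b, u⟩ := c
  simp only [Sn, Finset.mem_filter, Finset.mem_product, Finset.mem_range, VCfg]
  omega

lemma ite_eq_sum {s : Finset Cfg} (a0 : Cfg) (f : ℝ) (H : Cfg → ℝ) :
    ∑ d ∈ s, (if d = a0 then f else 0) * H d = if a0 ∈ s then f * H a0 else 0 := by
  rw [Finset.sum_congr rfl (fun d _ => show (if d = a0 then f else 0) * H d
      = if d = a0 then f * H d else 0 by split_ifs with h <;> simp [h])]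
  exact Finset.sum_ite_eq' s a0 (fun d => f * H d)

lemma sum_usdStep_mul {n : ℕ} {c : Cfg} (hc : VCfg n c) (p : ℝ) (H : Cfg → ℝ) :
    ∑ d ∈ Sn n, usdStep n p c d * H d =
      (1-p) * (c.1:ℝ) * (c.2.1:ℝ) / (n:ℝ)^2 * H (c.1 - 1, c.2.1, c.2.2 + 1)
    + (c.1:ℝ) * (c.2.1:ℝ) / (n:ℝ)^2 * H (c.1, c.2.1 - 1, c.2.2 + 1)
    + (c.2.2:ℝ) * (c.1:ℝ) / (n:ℝ)^2 * H (c.1 + 1, c.2.1, c.2.2 - 1)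
    + (c.2.2:ℝ) * (c.2.1:ℝ) / (n:ℝ)^2 * H (c.1, c.2.1 + 1, c.2.2 - 1)
    + (1 - ((2-p) * (c.1:ℝ) * (c.2.1:ℝ) + (c.2.2:ℝ) * ((c.1:ℝ) + (c.2.1:ℝ)))/(n:ℝ)^2) * H c
    := by
  obtain ⟨a, b, u⟩ := c
  simp only [VCfg] at hc
  unfold usdStep
  simp only [add_mul]
  rw [Finset.sum_add_distrib, Finset.sum_add_distrib, Finset.sum_add_distrib,
    Finset.sum_add_distrib]
  rw [ite_eq_sum, ite_eq_sum, ite_eq_sum, ite_eq_sum, ite_eq_sum]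
  congr 1
  · congr 1
    · congr 1
      · congr 1
        · -- shape 1
          by_cases h : ((a,b,u).1 - 1, (a,b,u).2.1, (a,b,u).2.2 + 1) ∈ Sn n
          · rw [if_pos h]
          · rw [if_neg h]
            rw [mem_Sn] at h
            have ha : a = 0 := by simp only [VCfg] at h; omega
            subst ha
            norm_num
        · -- shape 2
          by_cases h : ((a,b,u).1, (a,b,u).2.1 - 1, (a,b,u).2.2 + 1) ∈ Sn n
          · rw [if_pos h]
          · rw [if_neg h]
            rw [mem_Sn] at h
            have hb : b = 0 := by simp only [VCfg] at h; omega
            subst hb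
            norm_num
      · -- shape 3
        by_cases h : ((a,b,u).1 + 1, (a,b,u).2.1, (a,b,u).2.2 - 1) ∈ Sn n
        · rw [if_pos h]
        · rw [if_neg h]
          rw [mem_Sn] at h
          have hu : u = 0 := by simp only [VCfg] at h; omega
          subst hu
          norm_num
    · -- shape 4
      by_cases h : ((a,b,u).1, (a,b,u).2.1 + 1, (a,b,u).2.2 - 1) ∈ Sn n
      · rw [if_pos h]
      · rw [if_neg h]
        rw [mem_Sn] at h
        have hu : u = 0 := by simp only [VCfg] at h; omega
        subst hu
        norm_num
  · -- stay
    rw [if_pos (mem_Sn.mpr (by simpa [VCfg] using hc))]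

lemma sum_piece (y z n : ℕ) (v1 v2 v3 : ℝ) (hy : y ≤ z) (hz : z ≤ n) :
    ∑ j ∈ Finset.range n, (if j < y then v1 else if z ≤ j then v3 else v2)
      = ((y:ℕ):ℝ) * v1 + ((z - y : ℕ):ℝ) * v2 + ((n - z : ℕ):ℝ) * v3 := by
  have h1 : (∑ j ∈ Finset.Ico 0 y, (if j < y then v1 else if z ≤ j then v3 else v2))
      = ((y:ℕ):ℝ) * v1 := by
    rw [Finset.sum_congr rfl (g := fun _ => v1) (fun j hj => by
      rw [Finset.mem_Ico] at hj; rw [if_pos hj.2])]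
    simp [Nat.card_Ico]
  have h2 : (∑ j ∈ Finset.Ico y z, (if j < y then v1 else if z ≤ j then v3 else v2))
      = ((z - y : ℕ):ℝ) * v2 := by
    rw [Finset.sum_congr rfl (g := fun _ => v2) (fun j hj => by
      rw [Finset.mem_Ico] at hj; rw [if_neg (by omega), if_neg (by omega)])]
    simp [Nat.card_Ico]
  have h3 : (∑ j ∈ Finset.Ico z n, (if j < y then v1 else if z ≤ j then v3 else v2))
      = ((n - z : ℕ):ℝ) * v3 := by
    rw [Finset.sum_congr rfl (g := fun _ => v3) (fun j hj => by
      rw [Finset.mem_Ico] at hj; rw [if_neg (by omega), if_pos (by omega)])]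
    simp [Nat.card_Ico]
  rw [Finset.range_eq_Ico, ← Finset.sum_Ico_consecutive _ (Nat.zero_le z) hz,
    ← Finset.sum_Ico_consecutive _ (Nat.zero_le y) hy, h1, h2, h3]

lemma rhs_eval {n : ℕ} {c : Cfg} (hc : VCfg n c) (p : ℝ) (H : Cfg → ℝ) :
    ∑ i ∈ Finset.range n, ∑ j ∈ Finset.range n,
        (p * H (stepF n c i j 0) + (1-p) * H (stepF n c i j 1))
      = (c.1:ℝ) * ((c.2.1:ℝ) * (p * H c + (1-p) * H (c.1 - 1, c.2.1, c.2.2 + 1))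
            + ((c.1:ℝ) + (c.2.2:ℝ)) * H c)
      + (c.2.2:ℝ) * ((c.1:ℝ) * H (c.1 + 1, c.2.1, c.2.2 - 1)
            + (c.2.2:ℝ) * H c + (c.2.1:ℝ) * H (c.1, c.2.1 + 1, c.2.2 - 1))
      + (c.2.1:ℝ) * ((c.1:ℝ) * H (c.1, c.2.1 - 1, c.2.2 + 1)
            + ((c.2.1:ℝ) + (c.2.2:ℝ)) * H c) := by
  obtain ⟨a, b, u⟩ := c
  simp only [VCfg] at hc
  have hba : a ≤ n - b := by omega
  have hbn : n - b ≤ n := by omega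
  have block1 : ∀ i ∈ Finset.Ico 0 a,
      (∑ j ∈ Finset.Ico 0 n, (p * H (stepF n (a,b,u) i j 0) + (1-p) * H (stepF n (a,b,u) i j 1)))
      = ((0:ℕ):ℝ) * 0 + ((n - b - 0 : ℕ):ℝ) * (p * H (a,b,u) + (1-p) * H (a,b,u))
        + ((n - (n - b) : ℕ):ℝ) * (p * H (a,b,u) + (1-p) * H (a - 1, b, u + 1)) := by
    intro i hi
    rw [Finset.mem_Ico] at hi
    rw [← Finset.range_eq_Ico]
    have hcong : ∀ j ∈ Finset.range n,
        (p * H (stepF n (a,b,u) i j 0) + (1-p) * H (stepF n (a,b,u) i j 1))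
        = (if j < 0 then (0:ℝ) else if n - b ≤ j
            then p * H (a,b,u) + (1-p) * H (a - 1, b, u + 1)
            else p * H (a,b,u) + (1-p) * H (a,b,u)) := by
      intro j hj
      rw [Finset.mem_range] at hj
      unfold stepF
      split_ifs <;> dsimp only at * <;> first | rfl | omega
    rw [Finset.sum_congr rfl hcong]
    exact sum_piece 0 (n-b) n _ _ _ (by omega) (by omega)
  have block2 : ∀ i ∈ Finset.Ico a (n-b),
      (∑ j ∈ Finset.Ico 0 n, (p * H (stepF n (a,b,u) i j 0) + (1-p) * H (stepF n (a,b,u) i j 1)))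
      = ((a:ℕ):ℝ) * (p * H (a + 1, b, u - 1) + (1-p) * H (a + 1, b, u - 1))
        + ((n - b - a : ℕ):ℝ) * (p * H (a,b,u) + (1-p) * H (a,b,u))
        + ((n - (n - b) : ℕ):ℝ) * (p * H (a, b + 1, u - 1) + (1-p) * H (a, b + 1, u - 1)) := by
    intro i hi
    rw [Finset.mem_Ico] at hi
    rw [← Finset.range_eq_Ico]
    have hcong : ∀ j ∈ Finset.range n,
        (p * H (stepF n (a,b,u) i j 0) + (1-p) * H (stepF n (a,b,u) i j 1))
        = (if j < a then p * H (a + 1, b, u - 1) + (1-p) * H (a + 1, b, u - 1)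
            else if n - b ≤ j
            then p * H (a, b + 1, u - 1) + (1-p) * H (a, b + 1, u - 1)
            else p * H (a,b,u) + (1-p) * H (a,b,u)) := by
      intro j hj
      rw [Finset.mem_range] at hj
      unfold stepF
      split_ifs <;> dsimp only at * <;> first | rfl | omega
    rw [Finset.sum_congr rfl hcong]
    exact sum_piece a (n-b) n _ _ _ (by omega) (by omega)
  have block3 : ∀ i ∈ Finset.Ico (n-b) n,
      (∑ j ∈ Finset.Ico 0 n, (p * H (stepF n (a,b,u) i j 0) + (1-p) * H (stepF n (a,b,u) i j 1)))
      = ((a:ℕ):ℝ) * (p * H (a, b - 1, u + 1) + (1-p) * H (a, b - 1, u + 1))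
        + ((n - a : ℕ):ℝ) * (p * H (a,b,u) + (1-p) * H (a,b,u))
        + ((n - n : ℕ):ℝ) * 0 := by
    intro i hi
    rw [Finset.mem_Ico] at hi
    rw [← Finset.range_eq_Ico]
    have hcong : ∀ j ∈ Finset.range n,
        (p * H (stepF n (a,b,u) i j 0) + (1-p) * H (stepF n (a,b,u) i j 1))
        = (if j < a then p * H (a, b - 1, u + 1) + (1-p) * H (a, b - 1, u + 1)
            else if n ≤ j then (0:ℝ)
            else p * H (a,b,u) + (1-p) * H (a,b,u)) := by
      intro j hj
      rw [Finset.mem_range] at hj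
      unfold stepF
      split_ifs <;> dsimp only at * <;> first | rfl | omega
    rw [Finset.sum_congr rfl hcong]
    exact sum_piece a n n _ _ _ (by omega) (by omega)
  rw [Finset.range_eq_Ico, ← Finset.sum_Ico_consecutive _ (Nat.zero_le (n-b)) hbn,
    ← Finset.sum_Ico_consecutive _ (Nat.zero_le a) hba,
    Finset.sum_congr rfl block1, Finset.sum_congr rfl block2, Finset.sum_congr rfl block3]
  simp only [Finset.sum_const, Nat.card_Ico, nsmul_eq_mul, Nat.sub_zero]
  rw [show n - (n - b) = b from by omega, show n - b - a = u from by omega,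
    show n - a = b + u from by omega, show n - n = 0 from by omega,
    show n - b = a + u from by omega]
  push_cast
  ring

lemma step_identity {n : ℕ} (hn : 1 ≤ n) {c : Cfg} (hc : VCfg n c) (p : ℝ) (H : Cfg → ℝ) :
    ∑ d ∈ Sn n, usdStep n p c d * H d
      = (∑ i ∈ Finset.range n, ∑ j ∈ Finset.range n,
          (p * H (stepF n c i j 0) + (1-p) * H (stepF n c i j 1))) / (n:ℝ)^2 := by
  rw [sum_usdStep_mul hc p H, rhs_eval hc p H]
  obtain ⟨a, b, u⟩ := c
  simp only [VCfg] at hc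
  have hr : (a:ℝ) + b + u = (n:ℝ) := by exact_mod_cast congrArg (Nat.cast : ℕ → ℝ) hc
  have hne : (n:ℝ) ≠ 0 := by positivity
  rw [← hr]
  have h2 : ((a:ℝ) + ↑b + ↑u) ≠ 0 := by rw [hr]; exact hne
  field_simp
  ring

lemma usdStep_row_sum {n : ℕ} (hn : 1 ≤ n) {c : Cfg} (hc : VCfg n c) (p : ℝ) :
    ∑ d ∈ Sn n, usdStep n p c d = 1 := by
  have h := step_identity hn hc p (fun _ => 1)
  simp only [mul_one] at h
  rw [h]
  have he : (∑ i ∈ Finset.range n, ∑ j ∈ Finset.range n, (p + (1-p))) = (n:ℝ)^2 := by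
    simp only [Finset.sum_const, Finset.card_range, nsmul_eq_mul]
    ring
  rw [he]
  have hne : (n:ℝ) ≠ 0 := by positivity
  field_simp



/-- Truncation of a finite path to an infinite path. -/
def cut (t : ℕ) (v : Fin (t+1) → Cfg) : ℕ → Cfg := fun i => v ⟨min i t, by omega⟩

/-- The finite set of length-`t+1` paths through valid configurations. -/
def PF (n t : ℕ) : Finset (Fin (t+1) → Cfg) := Fintype.piFinset fun _ => Sn n

noncomputable def pathW (n : ℕ) (p : ℝ) (x0 : Cfg) (t : ℕ) (s : ℕ → Cfg) : ℝ :=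
  (if s 0 = x0 then (1:ℝ) else 0) * ∏ i ∈ Finset.range t, usdStep n p (s i) (s (i+1))

lemma cut_le {t : ℕ} (v : Fin (t+1) → Cfg) {i : ℕ} (h : i ≤ t) :
    cut t v i = v ⟨i, by omega⟩ := by
  unfold cut
  congr 1
  exact Fin.ext (by simp [Nat.min_eq_left h])

lemma cut_cons_zero {t : ℕ} (d : Cfg) (w : Fin (t+1) → Cfg) :
    cut (t+1) (Fin.cons d w) 0 = d := by
  unfold cut
  have h : (⟨min 0 (t+1), by omega⟩ : Fin (t+2)) = 0 := Fin.ext (by simp)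
  rw [h, Fin.cons_zero]

lemma cut_cons_succ {t : ℕ} (d : Cfg) (w : Fin (t+1) → Cfg) (i : ℕ) :
    cut (t+1) (Fin.cons d w) (i+1) = cut t w i := by
  unfold cut
  have h : (⟨min (i+1) (t+1), by omega⟩ : Fin (t+2)) = Fin.succ ⟨min i t, by omega⟩ :=
    Fin.ext (by simp [Nat.succ_min_succ])
  rw [h, Fin.cons_succ]

lemma sum_PF_zero {n : ℕ} (f : (Fin 1 → Cfg) → ℝ) :
    ∑ v ∈ PF n 0, f v = ∑ d ∈ Sn n, f (fun _ => d) := by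
  apply Finset.sum_nbij' (i := fun (v : Fin 1 → Cfg) => v 0)
    (j := fun (d : Cfg) => (fun _ => d : Fin 1 → Cfg))
  · intro v hv
    simp only [PF, Fintype.mem_piFinset] at hv
    exact hv 0
  · intro d hd
    simp only [PF, Fintype.mem_piFinset]
    intro _; exact hd
  · intro v _
    funext i
    have : i = 0 := Subsingleton.elim i 0
    rw [this]
  · intro d _; rfl
  · intro v _
    congr 1
    funext i
    have : i = 0 := Subsingleton.elim i 0
    rw [this]

lemma sum_PF_succ {n t : ℕ} (f : (Fin (t+2) → Cfg) → ℝ) :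
    ∑ v ∈ PF n (t+1), f v = ∑ d ∈ Sn n, ∑ w ∈ PF n t, f (Fin.cons d w) := by
  rw [← Finset.sum_product']
  apply Finset.sum_nbij' (i := fun (v : Fin (t+2) → Cfg) => ((v 0, Fin.tail v) : Cfg × (Fin (t+1) → Cfg)))
    (j := fun (y : Cfg × (Fin (t+1) → Cfg)) => Fin.cons y.1 y.2)
  · intro v hv
    simp only [PF, Fintype.mem_piFinset] at hv
    simp only [Finset.mem_product, PF, Fintype.mem_piFinset]
    exact ⟨hv 0, fun i => hv i.succ⟩
  · intro y hy
    simp only [Finset.mem_product, PF, Fintype.mem_piFinset] at hy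
    simp only [PF, Fintype.mem_piFinset]
    intro i
    refine Fin.cases ?_ ?_ i
    · simpa using hy.1
    · intro k; simpa using hy.2 k
  · intro v _
    exact Fin.cons_self_tail v
  · intro y _
    simp [Fin.tail_cons]
  · intro v _
    rw [Fin.cons_self_tail v]

noncomputable def SA (n : ℕ) (p : ℝ) (t : ℕ) (x0 : Cfg) : ℝ :=
  ∑ v ∈ PF n t, pathW n p x0 t (cut t v)

/-- Indicator that the path `s` reaches second coordinate `n` by time `t`. -/
noncomputable def hitInd (n t : ℕ) (s : ℕ → Cfg) : ℝ :=
  if (∃ i ≤ t, (s i).2.1 = n) then 1 else 0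

noncomputable def SH (n : ℕ) (p : ℝ) (t : ℕ) (x0 : Cfg) : ℝ :=
  ∑ v ∈ PF n t, hitInd n t (cut t v) * pathW n p x0 t (cut t v)

lemma pathW_cons {n t : ℕ} (p : ℝ) (x0 d : Cfg) (w : Fin (t+1) → Cfg) :
    pathW n p x0 (t+1) (cut (t+1) (Fin.cons d w))
      = (if d = x0 then (1:ℝ) else 0) *
        ((∏ i ∈ Finset.range t, usdStep n p (cut t w i) (cut t w (i+1)))
          * usdStep n p d (cut t w 0)) := by
  unfold pathW
  rw [cut_cons_zero, Finset.prod_range_succ']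
  congr 2
  · exact Finset.prod_congr rfl (fun i _ => by rw [cut_cons_succ, cut_cons_succ])

lemma hit_cons {n t : ℕ} (d : Cfg) (w : Fin (t+1) → Cfg) :
    (∃ i ≤ t+1, ((cut (t+1) (Fin.cons d w)) i).2.1 = n)
      ↔ (d.2.1 = n ∨ ∃ i ≤ t, ((cut t w) i).2.1 = n) := by
  constructor
  · rintro ⟨i, hi, h⟩
    cases i with
    | zero => left; rwa [cut_cons_zero] at h
    | succ k => right; exact ⟨k, by omega, by rwa [cut_cons_succ] at h⟩
  · rintro (h | ⟨i, hi, h⟩)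
    · exact ⟨0, by omega, by rwa [cut_cons_zero]⟩
    · exact ⟨i+1, by omega, by rwa [cut_cons_succ]⟩

lemma cutPF_mem {n t : ℕ} {w : Fin (t+1) → Cfg} (hw : w ∈ PF n t) (i : ℕ) :
    cut t w i ∈ Sn n := by
  simp only [PF, Fintype.mem_piFinset] at hw
  exact hw _

lemma SA_eq_one {n : ℕ} (hn : 1 ≤ n) (p : ℝ) :
    ∀ t (x0 : Cfg), VCfg n x0 → SA n p t x0 = 1 := by
  intro t
  induction t with
  | zero =>
    intro x0 hx0
    unfold SA
    rw [sum_PF_zero (f := fun v => pathW n p x0 0 (cut 0 v))]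
    have he : ∀ d ∈ Sn n, pathW n p x0 0 (cut 0 (fun _ => d))
        = if d = x0 then (1:ℝ) else 0 := by
      intro d _
      unfold pathW cut
      simp
    rw [Finset.sum_congr rfl he, Finset.sum_ite_eq' (Sn n) x0 (fun _ => (1:ℝ)),
      if_pos (mem_Sn.mpr hx0)]
  | succ t ih =>
    intro x0 hx0
    unfold SA
    rw [sum_PF_succ (f := fun v => pathW n p x0 (t+1) (cut (t+1) v))]
    have he : ∀ d ∈ Sn n,
        (∑ w ∈ PF n t, pathW n p x0 (t+1) (cut (t+1) (Fin.cons d w)))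
        = if d = x0 then
            (∑ w ∈ PF n t, (∏ i ∈ Finset.range t, usdStep n p (cut t w i) (cut t w (i+1)))
              * usdStep n p d (cut t w 0)) else 0 := by
      intro d _
      rw [Finset.sum_congr rfl (fun w _ => pathW_cons p x0 d w), ← Finset.mul_sum]
      split_ifs with h <;> simp
    rw [Finset.sum_congr rfl he, Finset.sum_ite_eq' (Sn n) x0, if_pos (mem_Sn.mpr hx0)]
    have he2 : ∀ w ∈ PF n t,
        (∏ i ∈ Finset.range t, usdStep n p (cut t w i) (cut t w (i+1)))
            * usdStep n p x0 (cut t w 0)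
        = ∑ d' ∈ Sn n, usdStep n p x0 d' * pathW n p d' t (cut t w) := by
      intro w hw
      have hmem := cutPF_mem hw 0
      unfold pathW
      rw [Finset.sum_congr rfl (g := fun d' => if cut t w 0 = d'
          then usdStep n p x0 d' * (∏ i ∈ Finset.range t,
            usdStep n p (cut t w i) (cut t w (i+1))) else 0)
        (fun d' _ => by
          by_cases h : cut t w 0 = d'
          · rw [if_pos h, if_pos h]; ring
          · rw [if_neg h, if_neg h]; ring)]
      rw [Finset.sum_ite_eq (Sn n) (cut t w 0), if_pos hmem]
      ring
    rw [Finset.sum_congr rfl he2, Finset.sum_comm]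
    have he3 : ∀ d' ∈ Sn n,
        (∑ w ∈ PF n t, usdStep n p x0 d' * pathW n p d' t (cut t w))
        = usdStep n p x0 d' := by
      intro d' hd'
      rw [← Finset.mul_sum]
      have : (∑ w ∈ PF n t, pathW n p d' t (cut t w)) = 1 := ih d' (mem_Sn.mp hd')
      rw [this, mul_one]
    rw [Finset.sum_congr rfl he3]
    exact usdStep_row_sum hn hx0 p

lemma hitInd_zero {n : ℕ} (d : Cfg) :
    hitInd n 0 (cut 0 (fun _ => d)) = if d.2.1 = n then 1 else 0 := by
  unfold hitInd
  have hiff : (∃ i ≤ 0, ((cut 0 (fun (_ : Fin 1) => d)) i).2.1 = n) ↔ d.2.1 = n := by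
    constructor
    · rintro ⟨i, _, h⟩; exact h
    · intro h; exact ⟨0, le_refl 0, h⟩
  rw [if_congr hiff rfl rfl]

lemma hitInd_cons {n t : ℕ} (d : Cfg) (w : Fin (t+1) → Cfg) :
    hitInd n (t+1) (cut (t+1) (Fin.cons d w))
      = if d.2.1 = n then 1 else hitInd n t (cut t w) := by
  unfold hitInd
  rw [if_congr (hit_cons d w) rfl rfl]
  by_cases hd : d.2.1 = n
  · rw [if_pos (Or.inl hd), if_pos hd]
  · rw [if_neg hd, if_congr (or_iff_right hd) rfl rfl]

lemma SH_eq_hitP {n : ℕ} (hn : 1 ≤ n) (p : ℝ) :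
    ∀ t (x0 : Cfg), VCfg n x0 → SH n p t x0 = hitP n p t x0 := by
  intro t
  induction t with
  | zero =>
    intro x0 hx0
    unfold SH
    rw [sum_PF_zero (f := fun v => hitInd n 0 (cut 0 v) * pathW n p x0 0 (cut 0 v))]
    have he : ∀ d ∈ Sn n,
        hitInd n 0 (cut 0 (fun _ => d)) * pathW n p x0 0 (cut 0 (fun _ => d))
        = if d = x0 then (if d.2.1 = n then (1:ℝ) else 0) else 0 := by
      intro d _
      rw [hitInd_zero]
      unfold pathW cut
      simp only [Finset.range_zero, Finset.prod_empty, mul_one]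
      by_cases h1 : d.2.1 = n <;> by_cases h2 : d = x0 <;> simp [h1, h2]
    rw [Finset.sum_congr rfl he, Finset.sum_ite_eq' (Sn n) x0, if_pos (mem_Sn.mpr hx0)]
    simp only [hitP]
  | succ t ih =>
    intro x0 hx0
    unfold SH
    rw [sum_PF_succ (f := fun v => hitInd n (t+1) (cut (t+1) v) * pathW n p x0 (t+1) (cut (t+1) v))]
    have he : ∀ d ∈ Sn n,
        (∑ w ∈ PF n t, hitInd n (t+1) (cut (t+1) (Fin.cons d w))
            * pathW n p x0 (t+1) (cut (t+1) (Fin.cons d w)))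
        = if d = x0 then
            (∑ w ∈ PF n t, (if x0.2.1 = n then (1:ℝ) else hitInd n t (cut t w)) *
              ((∏ i ∈ Finset.range t, usdStep n p (cut t w i) (cut t w (i+1)))
                * usdStep n p x0 (cut t w 0)))
          else 0 := by
      intro d _
      by_cases hd : d = x0
      · subst hd
        rw [if_pos rfl]
        refine Finset.sum_congr rfl (fun w _ => ?_)
        rw [hitInd_cons, pathW_cons, if_pos rfl, one_mul]
      · rw [if_neg hd]
        refine Finset.sum_eq_zero (fun w _ => ?_)
        rw [pathW_cons, if_neg hd, zero_mul, mul_zero]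
    rw [Finset.sum_congr rfl he, Finset.sum_ite_eq' (Sn n) x0, if_pos (mem_Sn.mpr hx0)]
    by_cases hx : x0.2.1 = n
    · have he2 : ∀ w ∈ PF n t,
          ((if x0.2.1 = n then (1:ℝ) else hitInd n t (cut t w)) *
            ((∏ i ∈ Finset.range t, usdStep n p (cut t w i) (cut t w (i+1)))
              * usdStep n p x0 (cut t w 0)))
          = ∑ d' ∈ Sn n, usdStep n p x0 d' * pathW n p d' t (cut t w) := by
        intro w hw
        rw [if_pos hx, one_mul]
        have hmem := cutPF_mem hw 0
        unfold pathW
        rw [Finset.sum_congr rfl (g := fun d' => if cut t w 0 = d'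
            then usdStep n p x0 d' * (∏ i ∈ Finset.range t,
              usdStep n p (cut t w i) (cut t w (i+1))) else 0)
          (fun d' _ => by
            by_cases h : cut t w 0 = d'
            · rw [if_pos h, if_pos h]; ring
            · rw [if_neg h, if_neg h]; ring)]
        rw [Finset.sum_ite_eq (Sn n) (cut t w 0), if_pos hmem]
        ring
      rw [Finset.sum_congr rfl he2, Finset.sum_comm]
      have he3 : ∀ d' ∈ Sn n,
          (∑ w ∈ PF n t, usdStep n p x0 d' * pathW n p d' t (cut t w))
          = usdStep n p x0 d' := by
        intro d' hd'
        rw [← Finset.mul_sum]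
        have h1 : (∑ w ∈ PF n t, pathW n p d' t (cut t w)) = 1 :=
          SA_eq_one hn p t d' (mem_Sn.mp hd')
        rw [h1, mul_one]
      rw [Finset.sum_congr rfl he3, usdStep_row_sum hn hx0 p]
      simp only [hitP, if_pos hx]
    · have he2 : ∀ w ∈ PF n t,
          ((if x0.2.1 = n then (1:ℝ) else hitInd n t (cut t w)) *
            ((∏ i ∈ Finset.range t, usdStep n p (cut t w i) (cut t w (i+1)))
              * usdStep n p x0 (cut t w 0)))
          = ∑ d' ∈ Sn n, usdStep n p x0 d' *
              (hitInd n t (cut t w) * pathW n p d' t (cut t w)) := by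
        intro w hw
        rw [if_neg hx]
        have hmem := cutPF_mem hw 0
        unfold pathW
        rw [Finset.sum_congr rfl (g := fun d' => if cut t w 0 = d'
            then usdStep n p x0 d' * (hitInd n t (cut t w) * (∏ i ∈ Finset.range t,
              usdStep n p (cut t w i) (cut t w (i+1)))) else 0)
          (fun d' _ => by
            by_cases h : cut t w 0 = d'
            · rw [if_pos h, if_pos h]; ring
            · rw [if_neg h, if_neg h]; ring)]
        rw [Finset.sum_ite_eq (Sn n) (cut t w 0), if_pos hmem]
        ring
      rw [Finset.sum_congr rfl he2, Finset.sum_comm]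
      have he3 : ∀ d' ∈ Sn n,
          (∑ w ∈ PF n t, usdStep n p x0 d' *
            (hitInd n t (cut t w) * pathW n p d' t (cut t w)))
          = usdStep n p x0 d' * hitP n p t d' := by
        intro d' hd'
        rw [← Finset.mul_sum]
        have h1 : (∑ w ∈ PF n t, hitInd n t (cut t w) * pathW n p d' t (cut t w))
            = hitP n p t d' := ih d' (mem_Sn.mp hd')
        rw [h1]
      rw [Finset.sum_congr rfl he3]
      refine (step_identity hn hx0 p (hitP n p t)).trans ?_
      simp only [hitP, if_neg hx]

lemma usdStep_support {n : ℕ} {p : ℝ} {c d : Cfg} (hc : VCfg n c) (hd : ¬ VCfg n d) :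
    usdStep n p c d = 0 := by
  obtain ⟨a, b, u⟩ := c
  simp only [VCfg] at hc hd
  unfold usdStep
  have h1 : (if d = ((a,b,u).1 - 1, (a,b,u).2.1, (a,b,u).2.2 + 1)
      then (1-p) * ((a,b,u).1:ℝ) * ((a,b,u).2.1:ℝ)/(n:ℝ)^2 else 0) = 0 := by
    split_ifs with h
    · subst h; dsimp only at hd hc ⊢
      have ha : a = 0 := by omega
      rw [ha]; norm_num
    · rfl
  have h2 : (if d = ((a,b,u).1, (a,b,u).2.1 - 1, (a,b,u).2.2 + 1)
      then ((a,b,u).1:ℝ) * ((a,b,u).2.1:ℝ)/(n:ℝ)^2 else 0) = 0 := by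
    split_ifs with h
    · subst h; dsimp only at hd hc ⊢
      have hb : b = 0 := by omega
      rw [hb]; norm_num
    · rfl
  have h3 : (if d = ((a,b,u).1 + 1, (a,b,u).2.1, (a,b,u).2.2 - 1)
      then ((a,b,u).2.2:ℝ) * ((a,b,u).1:ℝ)/(n:ℝ)^2 else 0) = 0 := by
    split_ifs with h
    · subst h; dsimp only at hd hc ⊢
      have hu : u = 0 := by omega
      rw [hu]; norm_num
    · rfl
  have h4 : (if d = ((a,b,u).1, (a,b,u).2.1 + 1, (a,b,u).2.2 - 1)
      then ((a,b,u).2.2:ℝ) * ((a,b,u).2.1:ℝ)/(n:ℝ)^2 else 0) = 0 := by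
    split_ifs with h
    · subst h; dsimp only at hd hc ⊢
      have hu : u = 0 := by omega
      rw [hu]; norm_num
    · rfl
  have h5 : (if d = (a,b,u) then
      1 - ((2 - p) * ((a,b,u).1:ℝ) * ((a,b,u).2.1:ℝ)
        + ((a,b,u).2.2:ℝ) * (((a,b,u).1:ℝ) + ((a,b,u).2.1:ℝ)))/(n:ℝ)^2 else 0) = 0 := by
    split_ifs with h
    · subst h; dsimp only at hd hc ⊢; omega
    · rfl
  rw [h1, h2, h3, h4, h5]
  norm_num

lemma pathW_support {n : ℕ} {p : ℝ} {x : Cfg} (hx : VCfg n x) {t : ℕ}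
    {v : Fin (t+1) → Cfg} (hv : pathW n p x t (cut t v) ≠ 0) : v ∈ PF n t := by
  unfold pathW at hv
  rcases mul_ne_zero_iff.mp hv with ⟨hind, hprod⟩
  have h0 : cut t v 0 = x := by
    by_contra h
    rw [if_neg h] at hind
    exact hind rfl
  have hfac := Finset.prod_ne_zero_iff.mp hprod
  have hvalid : ∀ i, i ≤ t → VCfg n (cut t v i) := by
    intro i
    induction i with
    | zero => intro _; rw [h0]; exact hx
    | succ k ihk =>
      intro hk
      have hkt : k ≤ t := by omega
      have hk' : k ∈ Finset.range t := Finset.mem_range.mpr (by omega)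
      by_contra hbad
      exact hfac k hk' (usdStep_support (ihk hkt) hbad)
  simp only [PF, Fintype.mem_piFinset]
  intro i
  have : cut t v i.val ∈ Sn n := mem_Sn.mpr (hvalid i.val (by omega))
  rwa [cut_le v (show i.val ≤ t by omega), Fin.eta] at this

lemma measure_hit_eq {n : ℕ} (hn : 1 ≤ n) {p : ℝ} {x : Cfg} (hx : VCfg n x)
    {μ : Measure (ℕ → Cfg)} (hμP : IsProbabilityMeasure μ)
    (hμ2 : ∀ (t : ℕ) (seq : ℕ → Cfg),
      (μ {ω | ∀ i ≤ t, ω i = seq i}).toReal =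
        (if seq 0 = x then (1 : ℝ) else 0) *
          ∏ i ∈ Finset.range t, usdStep n p (seq i) (seq (i + 1)))
    (t : ℕ) :
    (μ {ω | ∃ s ≤ t, (ω s).2.1 = n}).toReal = SH n p t x := by
  classical
  set C : (Fin (t+1) → Cfg) → Set (ℕ → Cfg) :=
    fun v => {ω | ∀ i ≤ t, ω i = cut t v i} with hC_def
  set Hs : Set (Fin (t+1) → Cfg) := {v | ∃ i ≤ t, ((cut t v) i).2.1 = n} with hHs_def
  have hE : {ω : ℕ → Cfg | ∃ s ≤ t, (ω s).2.1 = n} = ⋃ v ∈ Hs, C v := by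
    ext ω
    simp only [Set.mem_setOf_eq, Set.mem_iUnion]
    constructor
    · rintro ⟨s, hs, h⟩
      refine ⟨fun i => ω i.val, ⟨s, hs, ?_⟩, fun i hi => ?_⟩
      · rw [cut_le _ hs]; exact h
      · rw [cut_le _ hi]
    · rintro ⟨v, ⟨i, hi, h⟩, hω⟩
      exact ⟨i, hi, by rw [hω i hi]; exact h⟩
  have hCmeas : ∀ v, MeasurableSet (C v) := by
    intro v
    have : C v = ⋂ (i : ℕ), ⋂ (_ : i ≤ t), (fun ω : ℕ → Cfg => ω i) ⁻¹' {cut t v i} := by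
      ext ω
      simp [hC_def, Set.mem_iInter]
    rw [this]
    exact MeasurableSet.iInter fun i => MeasurableSet.iInter fun hi =>
      (measurable_pi_apply i) (measurableSet_singleton _)
  have hdisj : Hs.PairwiseDisjoint C := by
    intro v _ v' _ hne
    refine Set.disjoint_left.mpr (fun ω hωv hωv' => hne ?_)
    funext i
    have h1 := hωv i.val (show i.val ≤ t by omega)
    have h2 := hωv' i.val (show i.val ≤ t by omega)
    have h3 := h1.symm.trans h2
    rw [cut_le _ (show i.val ≤ t by omega), cut_le _ (show i.val ≤ t by omega)] at h3
    exact h3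
  have hcnt : Hs.Countable := Set.to_countable Hs
  rw [hE, measure_biUnion hcnt hdisj (fun v _ => hCmeas v)]
  rw [ENNReal.tsum_toReal_eq (fun _ => measure_ne_top μ _)]
  have hterm : ∀ v : Hs, (μ (C v)).toReal = pathW n p x t (cut t v.val) := by
    intro v
    exact hμ2 t (cut t v.val)
  rw [tsum_congr hterm, tsum_subtype Hs (fun v => pathW n p x t (cut t v))]
  rw [tsum_eq_sum (s := PF n t) (f := fun v => Hs.indicator (fun v => pathW n p x t (cut t v)) v)
    (fun v hv => ?_)]
  · refine Finset.sum_congr rfl (fun v _ => ?_)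
    by_cases h : v ∈ Hs
    · rw [Set.indicator_of_mem h]
      unfold hitInd
      have h' : ∃ i ≤ t, ((cut t v) i).2.1 = n := h
      rw [if_pos h', one_mul]
    · rw [Set.indicator_of_notMem h]
      unfold hitInd
      have h' : ¬ ∃ i ≤ t, ((cut t v) i).2.1 = n := h
      rw [if_neg h', zero_mul]
  · by_cases h : v ∈ Hs
    · rw [Set.indicator_of_mem h]
      by_contra hne
      exact hv (pathW_support hx hne)
    · exact Set.indicator_of_notMem h _

/-- `μ` is the law of the trajectory `(X(t))_{t ≥ 0}` of `USD_p` with `n` agents started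
from the configuration `x0`: it is a probability measure on paths whose finite-dimensional
cylinder probabilities are the products of the one-step transition probabilities. -/
def IsUSD (n : ℕ) (p : ℝ) (x0 : ℕ × ℕ × ℕ) (μ : Measure (ℕ → ℕ × ℕ × ℕ)) : Prop :=
  IsProbabilityMeasure μ ∧
  ∀ (t : ℕ) (seq : ℕ → ℕ × ℕ × ℕ),
    (μ {ω | ∀ i ≤ t, ω i = seq i}).toReal =
      (if seq 0 = x0 then (1 : ℝ) else 0) *
        ∏ i ∈ Finset.range t, usdStep n p (seq i) (seq (i + 1))

/-- The weighted bias `Δ_w = x₁ - (1 - p)·x₂` of a configuration. -/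
noncomputable def dw (p : ℝ) (c : ℕ × ℕ × ℕ) : ℝ := (c.1 : ℝ) - (1 - p) * (c.2.1 : ℝ)

/-- If `p̃ ≥ p`, `x̃₁ ≥ x₁` and `x̃₂ ≤ x₂`, then for every `t ≥ 0` the
probability that `USD_p` started from `x` has reached `X₂ = n` by time `t` is at least the
corresponding probability for `USD_p̃` started from `x̃`. -/
theorem stmt_4 (n : ℕ) (hn : 2 ≤ n) (p pt : ℝ)
    (hp : p ∈ Set.Icc (0 : ℝ) 1) (hpt : pt ∈ Set.Icc (0 : ℝ) 1) (hple : p ≤ pt)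
    (x xt : ℕ × ℕ × ℕ)
    (hx : x.1 + x.2.1 + x.2.2 = n) (hxt : xt.1 + xt.2.1 + xt.2.2 = n)
    (h1 : x.1 ≤ xt.1) (h2 : xt.2.1 ≤ x.2.1)
    (μ μt : Measure (ℕ → ℕ × ℕ × ℕ))
    (hμ : IsUSD n p x μ) (hμt : IsUSD n pt xt μt) (t : ℕ) :
    μt {ω | ∃ s ≤ t, (ω s).2.1 = n} ≤ μ {ω | ∃ s ≤ t, (ω s).2.1 = n} := by
  have hn1 : 1 ≤ n := by omega
  haveI := hμ.1
  haveI := hμt.1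
  have hxV : VCfg n x := hx
  have hxtV : VCfg n xt := hxt
  have e1 : (μ {ω | ∃ s ≤ t, (ω s).2.1 = n}).toReal = SH n p t x :=
    measure_hit_eq hn1 hxV hμ.1 hμ.2 t
  have e2 : (μt {ω | ∃ s ≤ t, (ω s).2.1 = n}).toReal = SH n pt t xt :=
    measure_hit_eq hn1 hxtV hμt.1 hμt.2 t
  have key : (μt {ω | ∃ s ≤ t, (ω s).2.1 = n}).toReal
      ≤ (μ {ω | ∃ s ≤ t, (ω s).2.1 = n}).toReal := by
    rw [e1, e2, SH_eq_hitP hn1 p t x hxV, SH_eq_hitP hn1 pt t xt hxtV]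
    exact hitP_mono hn1 hp.1 hpt.2 hple t x xt hxV hxtV h1 h2
  exact (ENNReal.toReal_le_toReal (measure_ne_top μt _) (measure_ne_top μ _)).mp key
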